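/- Under the Casimir conditions, if additionally R(x) ⪰ 0 (positive semidefinite) and Rc(ξ) ⪰ 0, then necessarily R(x) ∂S/∂x(x) = 0 and Rc(ξ) = 0 (the dissipation obstacle). -/

import Mathlib

open Matrix

/-- The dissipation obstacle: under the Casimir relations, if both `R` and `Rc`
are positive semidefinite then `R ∂S/∂x = 0` and `Rc = 0`. -/
theorem dissipation_obstacle {n nc : ℕ}
    (J R : (Fin n → ℝ) → Matrix (Fin n) (Fin n) ℝ)
    (Jc Rc : (Fin nc → ℝ) → Matrix (Fin nc) (Fin nc) ℝ)
    (P : (Fin n → ℝ) → Matrix (Fin n) (Fin nc) ℝ)   -- the Jacobian ∂S/∂x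
    (hJ : ∀ x, (J x)ᵀ = -(J x)) (hR : ∀ x, (R x)ᵀ = R x)
    (hRcrel : ∀ x ξ, Rc ξ = -((P x)ᵀ * R x * P x))
    (hJcrel : ∀ x ξ, Jc ξ = (P x)ᵀ * J x * P x)
    (hRpsd : ∀ x, (R x).PosSemidef)
    (hRcpsd : ∀ ξ, (Rc ξ).PosSemidef) :
    ∀ x ξ, R x * P x = 0 ∧ Rc ξ = 0 := by
  intro x ξ
  -- for each column j of P, the quadratic form of R on that column vanishes
  have hcol : ∀ j, R x *ᵥ (fun i => P x i j) = 0 := by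
    intro j
    apply ((hRpsd x).dotProduct_mulVec_zero_iff _).mp
    have h1 : star (fun i => P x i j) ⬝ᵥ R x *ᵥ (fun i => P x i j)
        = ((P x)ᵀ * R x * P x) j j := by
      have hsym : ∀ a b, R x a b = R x b a := fun a b => by
        conv_lhs => rw [← hR x]
        simp [Matrix.transpose_apply]
      simp only [Matrix.mul_apply, dotProduct, mulVec, Finset.mul_sum, Finset.sum_mul]
      rw [Finset.sum_comm]
      refine Finset.sum_congr rfl fun a _ => Finset.sum_congr rfl fun b _ => ?_
      rw [hsym b a]
      simp [Matrix.transpose_apply, Pi.star_apply]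
      ring
    have hle : ((P x)ᵀ * R x * P x) j j ≤ 0 := by
      have := (hRcpsd ξ).dotProduct_mulVec_nonneg (Pi.single j 1)
      rw [hRcrel x ξ] at this
      simpa [mulVec, dotProduct, Pi.single_apply] using this
    have hge : 0 ≤ ((P x)ᵀ * R x * P x) j j := by
      have := (hRpsd x).dotProduct_mulVec_nonneg (fun i => P x i j)
      rw [h1] at this
      exact this
    rw [h1]
    exact le_antisymm hle hge
  have hRP : R x * P x = 0 := by
    ext i j
    have := congrFun (hcol j) i
    simpa [Matrix.mul_apply, mulVec, dotProduct] using this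
  refine ⟨hRP, ?_⟩
  rw [hRcrel x ξ, Matrix.mul_assoc, hRP, Matrix.mul_zero, neg_zero]
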